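/- Let γ > 0, b > 0, p > 0, p₂ ≥ p, q_max > b + p/γ, and probability of call p_r ∈ [0, 1]. Define the expected profit as J(b̂, q̂) = p_r·[G(q₁*) - p·q₁* + p₂(b̂ - q₁*)₊ - p₂|q₁* - q̂|] + (1-p_r)·[G(q₀*) - p·max(b̂, q₀*)], where q₀*, q₁* are the second-stage optimal consumptions given reports (b̂, q̂). If 0 ≤ p_r ≤ p/(p₂ + p), then the optimal reported baseline is b̂* = b + p_r·p₂/(γ(1-p_r)), and if p/(p₂+p) ≤ p_r ≤ 1 then b̂* = q_max. In both cases the optimal reported reduced consumption is q̂* = max(b - p₂/γ, 0). -/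

import Mathlib

open Set

noncomputable def Gd (γ x q : ℝ) : ℝ := if q ≤ x then -γ/2*q^2 + γ*x*q else γ/2*x^2

lemma gd_mono (γ x : ℝ) (hγ : 0 < γ) {a c : ℝ} (h : a ≤ c) :
    Gd γ x a ≤ Gd γ x c := by
  unfold Gd
  split_ifs with h1 h2 h2
  · nlinarith [mul_nonneg (mul_nonneg hγ.le (sub_nonneg.2 h)) (by linarith : (0:ℝ) ≤ 2*x - a - c)]
  · nlinarith [mul_nonneg hγ.le (sq_nonneg (x - a))]
  · linarith
  · exact le_refl _

-- Ψ(t) = Gd t - p t  with p = γ(x-b); nondecreasing up to b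
lemma psi_mono (γ b x : ℝ) (hγ : 0 < γ) (hbx : b ≤ x) {a c : ℝ} (h : a ≤ c) (hcb : c ≤ b) :
    Gd γ x a - γ*(x-b)*a ≤ Gd γ x c - γ*(x-b)*c := by
  unfold Gd
  rw [if_pos (le_trans hcb hbx), if_pos (by linarith)]
  nlinarith [mul_nonneg (mul_nonneg hγ.le (sub_nonneg.2 h)) (by linarith : (0:ℝ) ≤ 2*b - a - c)]

-- Ψ nonincreasing above b
lemma psi_anti (γ b x : ℝ) (hγ : 0 < γ) (hbx : b ≤ x) {a c : ℝ} (hba : b ≤ a) (h : a ≤ c) :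
    Gd γ x c - γ*(x-b)*c ≤ Gd γ x a - γ*(x-b)*a := by
  unfold Gd
  split_ifs with h1 h2 h2
  · nlinarith [mul_nonneg (mul_nonneg hγ.le (sub_nonneg.2 h)) (by linarith : (0:ℝ) ≤ a + c - 2*b)]
  · linarith
  · -- a ≤ x < c
    nlinarith [mul_nonneg hγ.le (sq_nonneg (x - a)),
      mul_nonneg (mul_nonneg hγ.le (by linarith : (0:ℝ) ≤ x - a)) (by linarith : (0:ℝ) ≤ c - x),
      mul_nonneg (mul_nonneg hγ.le (by linarith : (0:ℝ) ≤ a - b)) (by linarith : (0:ℝ) ≤ c - a)]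
  · -- x < a ≤ c
    nlinarith [mul_nonneg (mul_nonneg hγ.le (by linarith : (0:ℝ) ≤ x - b)) (sub_nonneg.2 h)]

lemma lemF (γ b x c : ℝ) (hγ : 0 < γ) (hb : 0 < b) (hbx : b < x) (hpp : x - b ≤ b - c)
    {r : ℝ} (hr : 0 ≤ r) :
    Gd γ x r - (γ*(x-b) + γ*(b-c))*r ≤ Gd γ x (max c 0) - (γ*(x-b) + γ*(b-c))*(max c 0) := by
  have hcb : c < b := by linarith
  have hm : max c 0 ≤ x := by
    rcases le_total c 0 with h|h
    · rw [max_eq_right h]; linarith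
    · rw [max_eq_left h]; linarith
  unfold Gd
  rw [if_pos hm]
  split_ifs with h1
  · rcases le_total c 0 with h|h
    · rw [max_eq_right h]
      nlinarith [mul_nonneg hγ.le (sq_nonneg r),
        mul_nonneg (mul_nonneg hγ.le hr) (by linarith : (0:ℝ) ≤ -c)]
    · rw [max_eq_left h]
      nlinarith [mul_nonneg hγ.le (sq_nonneg (r - c))]
  · rcases le_total c 0 with h|h
    · rw [max_eq_right h]
      nlinarith [mul_nonneg (mul_nonneg hγ.le (by linarith : (0:ℝ) ≤ x - c)) (by linarith : (0:ℝ) ≤ r - x),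
        mul_nonneg (mul_nonneg hγ.le (by linarith : (0:ℝ) ≤ -c)) (by linarith : (0:ℝ) ≤ x),
        mul_nonneg hγ.le (sq_nonneg x)]
    · rw [max_eq_left h]
      nlinarith [mul_nonneg (mul_nonneg hγ.le (by linarith : (0:ℝ) ≤ x - c)) (by linarith : (0:ℝ) ≤ r - x),
        mul_nonneg hγ.le (sq_nonneg (x - c))]

lemma lemA (γ b x c p p₂ qh bh q : ℝ) (hγ : 0 < γ) (hb : 0 < b) (hbx : b < x)
    (hpd : p = γ*(x-b)) (hp2d : p₂ = γ*(b-c)) (hpp : p ≤ p₂)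
    (hqh : 0 ≤ qh) (hqb : qh ≤ bh) :
    Gd γ x q - (p*q - p₂ * max (bh - q) 0 + p₂ * |q - qh|)
      ≤ Gd γ x (max c 0) - (p + p₂) * (max c 0) + p₂ * bh := by
  subst hpd hp2d
  have hpp' : x - b ≤ b - c := by nlinarith
  have hp2pos : 0 ≤ γ*(b-c) := by nlinarith
  rcases le_total qh q with hcase | hcase
  · rw [abs_of_nonneg (by linarith)]
    have hstep : max (bh - q) 0 - (q - qh) ≤ bh - q := by
      rcases le_total q bh with h|h
      · rw [max_eq_left (by linarith)]; linarith
      · rw [max_eq_right (by linarith)]; linarith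
    have h2 := lemF γ b x c hγ hb hbx hpp' (le_trans hqh hcase)
    nlinarith [mul_le_mul_of_nonneg_left hstep hp2pos]
  · rw [abs_of_nonpos (by linarith), max_eq_left (by linarith : (0:ℝ) ≤ bh - q)]
    rcases le_total 0 q with hq | hq
    · have h2 := lemF γ b x c hγ hb hbx hpp' hq
      nlinarith [mul_le_mul_of_nonneg_left hcase hp2pos]
    · have hgd : Gd γ x q = -γ/2*q^2 + γ*x*q := by unfold Gd; rw [if_pos (by linarith)]
      have hneg : Gd γ x q - γ*(x-b)*q ≤ 0 := by
        rw [hgd]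
        nlinarith [mul_nonneg hγ.le (sq_nonneg q),
          mul_nonneg (mul_nonneg hγ.le hb.le) (by linarith : (0:ℝ) ≤ -q)]
      have hFm0 : 0 ≤ Gd γ x (max c 0) - (γ*(x-b)+γ*(b-c))*(max c 0) := by
        have h0 := lemF γ b x c hγ hb hbx hpp' (le_refl (0:ℝ))
        have hg0 : Gd γ x 0 = 0 := by unfold Gd; rw [if_pos (by linarith)]; ring
        linarith
      have h3 : 0 ≤ γ*(b-c)*qh := mul_nonneg hp2pos hqh
      linarith

lemma lemB (γ b x p bh q : ℝ) (hγ : 0 < γ) (hb : 0 < b) (hbx : b < x) (hpd : p = γ*(x-b)) :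
    Gd γ x q - p * max bh q ≤ Gd γ x (max bh b) - p * (max bh b) := by
  subst hpd
  rcases le_total bh b with hbb | hbb
  · rw [max_eq_right hbb]
    rcases le_total q bh with hq | hq
    · rw [max_eq_left hq]
      have h1 : Gd γ x q ≤ Gd γ x bh := gd_mono γ x hγ hq
      have h2 := psi_mono γ b x hγ hbx.le hbb le_rfl
      linarith
    · rw [max_eq_right hq]
      rcases le_total q b with h|h
      · have := psi_mono γ b x hγ hbx.le h le_rfl
        linarith
      · have := psi_anti γ b x hγ hbx.le le_rfl h
        linarith
  · rw [max_eq_left hbb]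
    rcases le_total q bh with hq | hq
    · rw [max_eq_left hq]
      have h1 : Gd γ x q ≤ Gd γ x bh := gd_mono γ x hγ hq
      linarith
    · rw [max_eq_right hq]
      have := psi_anti γ b x hγ hbx.le hbb hq
      linarith

lemma lemC2 (γ b x p p₂ pr qmax bh : ℝ) (hγ : 0 < γ) (hb : 0 < b) (hbx : b < x)
    (hpd : p = γ*(x-b)) (hpp : p ≤ p₂) (hpr0 : 0 ≤ pr) (hpr1 : pr ≤ 1)
    (hthr : p ≤ pr*(p₂+p)) (hbh : bh ≤ qmax) (hxq : x < qmax) :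
    pr*(p₂*bh) + (1-pr)*(Gd γ x (max bh b) - p*(max bh b))
      ≤ pr*(p₂*qmax) + (1-pr)*(Gd γ x qmax - p*qmax) := by
  subst hpd
  have hgq : Gd γ x qmax = γ/2*x^2 := by unfold Gd; rw [if_neg (by linarith)]
  set m := max bh b with hm
  have hbm : b ≤ m := le_max_right _ _
  have hmq : m ≤ qmax := max_le hbh (by linarith)
  have hbhm : bh ≤ m := le_max_left _ _
  have hp20 : 0 < p₂ := by nlinarith
  have h1 : pr*(p₂*bh) ≤ pr*(p₂*m) :=
    mul_le_mul_of_nonneg_left (mul_le_mul_of_nonneg_left hbhm hp20.le) hpr0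
  have hkey : (1-pr)*(γ*(x-b)) ≤ pr*p₂ := by nlinarith
  have hs : 0 ≤ 1 - pr := by linarith
  clear_value m
  rcases le_total m x with hmx | hmx
  · have hgm : Gd γ x m = -γ/2*m^2 + γ*x*m := by unfold Gd; rw [if_pos hmx]
    rw [hgm, hgq]
    nlinarith [mul_nonneg (mul_nonneg hs hγ.le) (sq_nonneg (x - m)),
      mul_le_mul_of_nonneg_right hkey (by linarith : (0:ℝ) ≤ qmax - m)]
  · have hgm : Gd γ x m = γ/2*x^2 := by
      unfold Gd; split_ifs with h
      · have hmx2 : m = x := le_antisymm h hmx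
        rw [hmx2]; ring
      · rfl
    rw [hgm, hgq]
    nlinarith [mul_le_mul_of_nonneg_right hkey (by linarith : (0:ℝ) ≤ qmax - m)]

lemma lemC1 (γ b x p p₂ pr qmax bh : ℝ) (hγ : 0 < γ) (hb : 0 < b) (hbx : b < x)
    (hpd : p = γ*(x-b)) (hpp : p ≤ p₂) (hpr0 : 0 ≤ pr) (hthr : pr*(p₂+p) ≤ p)
    (hbh : bh ≤ qmax) (hxq : x ≤ qmax) :
    pr*(p₂*bh) + (1-pr)*(Gd γ x (max bh b) - p*(max bh b))
      ≤ pr*(p₂*(b + pr*p₂/(γ*(1-pr))))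
        + (1-pr)*(Gd γ x (b + pr*p₂/(γ*(1-pr))) - p*(b + pr*p₂/(γ*(1-pr)))) := by
  have hp0 : 0 < p := by rw [hpd]; nlinarith
  have hp20 : 0 < p₂ := lt_of_lt_of_le hp0 hpp
  have hpr2 : pr ≤ 1/2 := by nlinarith
  have hs : 0 < 1 - pr := by linarith
  have hγs : 0 < γ*(1-pr) := mul_pos hγ hs
  subst hpd
  set B := b + pr*p₂/(γ*(1-pr)) with hBdef
  have hB : γ*(1-pr)*(B - b) = pr*p₂ := by
    rw [hBdef]; field_simp; ring
  clear_value B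
  have hBb : b ≤ B := by nlinarith [mul_nonneg hpr0 hp20.le, hB]
  have hkey : pr*p₂ ≤ (1-pr)*(γ*(x-b)) := by nlinarith
  have hBx : B ≤ x := by
    have h : γ*(1-pr)*(B-b) ≤ γ*(1-pr)*(x-b) := by rw [hB]; linarith [hkey]
    nlinarith [h]
  have hGB : Gd γ x B = -γ/2*B^2 + γ*x*B := by unfold Gd; rw [if_pos hBx]
  set m := max bh b with hm
  have hbm : b ≤ m := le_max_right _ _
  have hmq : m ≤ qmax := max_le hbh (by linarith)
  have hbhm : bh ≤ m := le_max_left _ _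
  have h1 : pr*(p₂*bh) ≤ pr*(p₂*m) :=
    mul_le_mul_of_nonneg_left (mul_le_mul_of_nonneg_left hbhm hp20.le) hpr0
  clear_value m
  rw [hGB]
  rcases le_total m x with hmx | hmx
  · have hgm : Gd γ x m = -γ/2*m^2 + γ*x*m := by unfold Gd; rw [if_pos hmx]
    rw [hgm]
    have e2 : pr*p₂*(m - B) = γ*(1-pr)*(B-b)*(m-B) := by
      linear_combination (m - B) * hB.symm
    nlinarith [e2, mul_nonneg (mul_nonneg hγ.le hs.le) (sq_nonneg (m - B))]
  · have hgm : Gd γ x m = γ/2*x^2 := by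
      unfold Gd; split_ifs with h
      · have hmx2 : m = x := le_antisymm h hmx
        rw [hmx2]; ring
      · rfl
    rw [hgm]
    have e3 : pr*p₂*(m - x) ≤ (1-pr)*(γ*(x-b))*(m - x) :=
      mul_le_mul_of_nonneg_right hkey (by linarith)
    have e4 : pr*p₂*(x - B) = γ*(1-pr)*(B-b)*(x-B) := by
      linear_combination (x - B) * hB.symm
    nlinarith [e3, e4, mul_nonneg (mul_nonneg hγ.le hs.le) (sq_nonneg (x - B))]

/-- first-stage optimal reports: bhat* = b + p_r·p₂/(γ(1-p_r)) below the
threshold p/(p₂+p), bhat* = q_max above it; qhat* = max(b - p₂/γ, 0) in both cases. -/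
theorem stmt4 (γ b p p₂ qmax pr : ℝ) (hγ : 0 < γ) (hb : 0 < b) (hp : 0 < p)
    (hp₂ : p ≤ p₂) (hqmax : b + p / γ < qmax) (hpr : pr ∈ Set.Icc (0:ℝ) 1)
    (G : ℝ → ℝ)
    (hG : ∀ q, G q = if q ≤ b + p / γ then -γ/2 * q^2 + (γ*b + p) * q
                     else p^2/(2*γ) + γ*b^2/2 + p*b)
    (q0 q1 : ℝ → ℝ → ℝ)
    (hq0 : ∀ bhat qhat, IsMaxOn (fun q => G q - p * max bhat q) (Set.Icc 0 qmax) (q0 bhat qhat))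
    (hq1 : ∀ bhat qhat, IsMaxOn
      (fun q => G q - (p*q - p₂ * max (bhat - q) 0 + p₂ * |q - qhat|))
      (Set.Icc 0 qmax) (q1 bhat qhat))
    (J : ℝ → ℝ → ℝ)
    (hJ : ∀ bhat qhat, J bhat qhat =
      pr * (G (q1 bhat qhat) - (p * q1 bhat qhat - p₂ * max (bhat - q1 bhat qhat) 0
              + p₂ * |q1 bhat qhat - qhat|))
      + (1 - pr) * (G (q0 bhat qhat) - p * max bhat (q0 bhat qhat))) :
    (pr ≤ p/(p₂+p) →
      IsMaxOn (fun x : ℝ × ℝ => J x.1 x.2)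
        {x : ℝ × ℝ | 0 ≤ x.2 ∧ x.2 ≤ x.1 ∧ x.1 ≤ qmax}
        (b + pr*p₂/(γ*(1-pr)), max (b - p₂/γ) 0)) ∧
    (p/(p₂+p) ≤ pr →
      IsMaxOn (fun x : ℝ × ℝ => J x.1 x.2)
        {x : ℝ × ℝ | 0 ≤ x.2 ∧ x.2 ≤ x.1 ∧ x.1 ≤ qmax}
        (qmax, max (b - p₂/γ) 0)) := by
  obtain ⟨hpr0, hpr1⟩ := hpr
  have hp20 : 0 < p₂ := lt_of_lt_of_le hp hp₂
  set x := b + p/γ with hxdef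
  have hbx : b < x := by
    have : 0 < p/γ := div_pos hp hγ
    rw [hxdef]; linarith
  have hpd : p = γ*(x-b) := by rw [hxdef]; field_simp; ring
  clear_value x
  set c := b - p₂/γ with hcdef
  have hp2d : p₂ = γ*(b-c) := by rw [hcdef]; field_simp; ring
  clear_value c
  have hcb : c < b := by nlinarith
  have hG2 : ∀ q, G q = Gd γ x q := by
    intro q
    rw [hG q]
    unfold Gd
    split_ifs with h
    · rw [hpd]; ring
    · rw [hpd]; field_simp; ring
  set qs := max c 0 with hqsdef
  have hqs0 : 0 ≤ qs := le_max_right _ _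
  have hqsb : qs ≤ b := max_le hcb.le hb.le
  have hqsx : qs ≤ qmax := by linarith
  constructor
  · -- case pr ≤ p/(p₂+p)
    intro hcase
    have hthr : pr*(p₂+p) ≤ p := (le_div_iff₀ (by positivity)).mp hcase
    have hpr2 : pr ≤ 1/2 := by nlinarith
    have hs : 0 < 1 - pr := by linarith
    set B := b + pr*p₂/(γ*(1-pr)) with hBdef
    have hB : γ*(1-pr)*(B - b) = pr*p₂ := by
      rw [hBdef]; field_simp; ring
    clear_value B
    have hBb : b ≤ B := by nlinarith [hB, mul_nonneg hpr0 hp20.le, mul_pos hγ hs]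
    have hkey : pr*p₂ ≤ (1-pr)*p := by linarith
    have hkey2 : pr*p₂ ≤ (1-pr)*(γ*(x-b)) := by rw [← hpd]; exact hkey
    have hBx : B ≤ x := by
      have h : γ*(1-pr)*(B-b) ≤ γ*(1-pr)*(x-b) := by rw [hB]; linarith
      nlinarith [h, mul_pos hγ hs]
    have hBq : B ≤ qmax := by linarith
    have E1 : G (q1 B qs) - (p * q1 B qs - p₂ * max (B - q1 B qs) 0 + p₂ * |q1 B qs - qs|)
        = Gd γ x qs - (p + p₂) * qs + p₂ * B := by
      apply le_antisymm
      · rw [hG2]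
        exact lemA γ b x c p p₂ qs B (q1 B qs) hγ hb hbx hpd hp2d hp₂ hqs0 (by linarith)
      · have h := isMaxOn_iff.mp (hq1 B qs) qs (Set.mem_Icc.mpr ⟨hqs0, hqsx⟩)
        simp only [sub_self, abs_zero] at h
        rw [hG2 qs, max_eq_left (by linarith : (0:ℝ) ≤ B - qs)] at h
        linarith
    have E0 : G (q0 B qs) - p * max B (q0 B qs) = Gd γ x B - p * B := by
      apply le_antisymm
      · have hlb := lemB γ b x p B (q0 B qs) hγ hb hbx hpd
        rw [max_eq_left hBb] at hlb
        rw [hG2]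
        exact hlb
      · have h := isMaxOn_iff.mp (hq0 B qs) B (Set.mem_Icc.mpr ⟨by linarith, hBq⟩)
        simp only [max_self] at h
        rw [hG2 B] at h
        linarith
    rw [isMaxOn_iff]
    rintro ⟨bh, qh⟩ ⟨h1, h2, h3⟩
    show J bh qh ≤ J B qs
    rw [hJ bh qh, hJ B qs, E1, E0]
    have hA1 : G (q1 bh qh) - (p * q1 bh qh - p₂ * max (bh - q1 bh qh) 0 + p₂ * |q1 bh qh - qh|)
        ≤ Gd γ x qs - (p + p₂) * qs + p₂ * bh := by
      rw [hG2]
      exact lemA γ b x c p p₂ qh bh (q1 bh qh) hγ hb hbx hpd hp2d hp₂ h1 h2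
    have hB1 : G (q0 bh qh) - p * max bh (q0 bh qh) ≤ Gd γ x (max bh b) - p * (max bh b) := by
      rw [hG2]
      exact lemB γ b x p bh (q0 bh qh) hγ hb hbx hpd
    have hC := lemC1 γ b x p p₂ pr qmax bh hγ hb hbx hpd hp₂ hpr0 hthr h3 hqmax.le
    rw [← hBdef] at hC
    have m1 := mul_le_mul_of_nonneg_left hA1 hpr0
    have m2 := mul_le_mul_of_nonneg_left hB1 (by linarith : (0:ℝ) ≤ 1 - pr)
    linarith [m1, m2, hC]
  · -- case p/(p₂+p) ≤ pr
    intro hcase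
    have hthr : p ≤ pr*(p₂+p) := (div_le_iff₀ (by positivity)).mp hcase
    have E1 : G (q1 qmax qs) - (p * q1 qmax qs - p₂ * max (qmax - q1 qmax qs) 0 + p₂ * |q1 qmax qs - qs|)
        = Gd γ x qs - (p + p₂) * qs + p₂ * qmax := by
      apply le_antisymm
      · rw [hG2]
        exact lemA γ b x c p p₂ qs qmax (q1 qmax qs) hγ hb hbx hpd hp2d hp₂ hqs0 hqsx
      · have h := isMaxOn_iff.mp (hq1 qmax qs) qs (Set.mem_Icc.mpr ⟨hqs0, hqsx⟩)
        simp only [sub_self, abs_zero] at h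
        rw [hG2 qs, max_eq_left (by linarith : (0:ℝ) ≤ qmax - qs)] at h
        linarith
    have E0 : G (q0 qmax qs) - p * max qmax (q0 qmax qs) = Gd γ x qmax - p * qmax := by
      apply le_antisymm
      · have hlb := lemB γ b x p qmax (q0 qmax qs) hγ hb hbx hpd
        rw [max_eq_left (by linarith : b ≤ qmax)] at hlb
        rw [hG2]
        exact hlb
      · have h := isMaxOn_iff.mp (hq0 qmax qs) x (Set.mem_Icc.mpr ⟨by linarith, hqmax.le⟩)
        rw [hG2 x, max_eq_left hqmax.le] at h
        have hgg : Gd γ x x = Gd γ x qmax := by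
          unfold Gd
          rw [if_pos le_rfl, if_neg (not_le.mpr hqmax)]
          ring
        linarith
    rw [isMaxOn_iff]
    rintro ⟨bh, qh⟩ ⟨h1, h2, h3⟩
    show J bh qh ≤ J qmax qs
    rw [hJ bh qh, hJ qmax qs, E1, E0]
    have hA1 : G (q1 bh qh) - (p * q1 bh qh - p₂ * max (bh - q1 bh qh) 0 + p₂ * |q1 bh qh - qh|)
        ≤ Gd γ x qs - (p + p₂) * qs + p₂ * bh := by
      rw [hG2]
      exact lemA γ b x c p p₂ qh bh (q1 bh qh) hγ hb hbx hpd hp2d hp₂ h1 h2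
    have hB1 : G (q0 bh qh) - p * max bh (q0 bh qh) ≤ Gd γ x (max bh b) - p * (max bh b) := by
      rw [hG2]
      exact lemB γ b x p bh (q0 bh qh) hγ hb hbx hpd
    have hC := lemC2 γ b x p p₂ pr qmax bh hγ hb hbx hpd hp₂ hpr0 hpr1 hthr h3 hqmax
    have m1 := mul_le_mul_of_nonneg_left hA1 hpr0
    have m2 := mul_le_mul_of_nonneg_left hB1 (by linarith : (0:ℝ) ≤ 1 - pr)
    linarith [m1, m2, hC]
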